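/- Let Σ be a segmentation of Ω and write f_{Σ,k;1} = f_{Σ,k−1}∘⋯∘f_{Σ,1} : ℂ^{v_1} → ℂ^{v_k}. Then for each 1 ≤ k < m, the rank of the restriction of f_{Σ,k;1} to ker f_{Σ,k+1;1} equals the number of subsegments of Σ of the form {(1,j_1),(2,j_2),…,(k,j_k)} (i.e., starting at level 1 and ending at level k). Moreover, for every p ∈ ℤ, dim (f_{Σ,m;1})^{−1}(F_p) = dim ker f_{Σ,m;1} + #{subsegments of Σ of the form {(1,j_1),…,(m,j_m)} with χ_{j_m} ≤ p}, where F_p = span{e_j : χ_j ≤ p} ⊆ ℂ^n. -/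

import Mathlib

open Matrix

noncomputable section

/-- The indexing set `Ω = {(i,j) : 1 ≤ i ≤ m, 1 ≤ j ≤ v_i}` for the standard basis vectors of
`⊕ ℂ^{v_i}`; levels are indexed by `Fin (m'+1)` (so `m = m'+1`) and `d` is the dimension
vector (with `d (Fin.last m') = n`). -/
abbrev QOmega (m' : ℕ) (d : Fin (m' + 1) → ℕ) := Σ i : Fin (m' + 1), Fin (d i)

/-- A point of `V = ⊕_{i=1}^{m-1} Hom(ℂ^{v_i}, ℂ^{v_{i+1}})`, as a family of matrices. -/
abbrev QRep (m' : ℕ) (d : Fin (m' + 1) → ℕ) :=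
  ∀ i : Fin m', Matrix (Fin (d i.succ)) (Fin (d i.castSucc)) ℂ

/-- An element of `GL_{v_1} × ⋯ × GL_{v_{m-1}} × GL_n`. -/
abbrev QGroup (m' : ℕ) (d : Fin (m' + 1) → ℕ) := ∀ i : Fin (m' + 1), GL (Fin (d i)) ℂ

/-- The base-change action of the group on the space of quiver representations. -/
def qAct {m' : ℕ} {d : Fin (m' + 1) → ℕ} (g : QGroup m' d) (f : QRep m' d) : QRep m' d :=
  fun i => ((g i.succ : Matrix (Fin (d i.succ)) (Fin (d i.succ)) ℂ)) * f i *
    (((g i.castSucc)⁻¹ : GL (Fin (d i.castSucc)) ℂ) : Matrix _ _ ℂ)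

/-- Membership in the parabolic `P_χ ⊆ GL_n`: the entries `g_{kl}` with `χ_k > χ_l` vanish. -/
def InParabolic {N : ℕ} (χ : Fin N → ℤ) (A : Matrix (Fin N) (Fin N) ℂ) : Prop :=
  ∀ k l : Fin N, χ l < χ k → A k l = 0

/-- The set of levels occurring in a subset `S ⊆ Ω`. -/
def levelsOf {m' : ℕ} {d : Fin (m' + 1) → ℕ} (S : Set (QOmega m' d)) : Set (Fin (m' + 1)) :=
  {i | ∃ j : Fin (d i), (⟨i, j⟩ : QOmega m' d) ∈ S}

/-- A subsegment of `Ω`: a set of the form `{(k,j_k),(k+1,j_{k+1}),…,(ℓ,j_ℓ)}`, i.e. a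
nonempty subset with at most one element at each level whose set of levels is an interval. -/
def IsSubsegment {m' : ℕ} {d : Fin (m' + 1) → ℕ} (S : Set (QOmega m' d)) : Prop :=
  S.Nonempty ∧
  (∀ (i : Fin (m' + 1)) (j j' : Fin (d i)),
    (⟨i, j⟩ : QOmega m' d) ∈ S → (⟨i, j'⟩ : QOmega m' d) ∈ S → j = j') ∧
  (∀ i₁ i₂ i₃ : Fin (m' + 1), i₁ ∈ levelsOf S → i₂ ∈ levelsOf S →
    i₁ ≤ i₃ → i₃ ≤ i₂ → i₃ ∈ levelsOf S)

/-- A segmentation of `Ω`: a partition of `Ω` into subsegments. -/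
def IsSegmentation {m' : ℕ} {d : Fin (m' + 1) → ℕ} (P : Set (Set (QOmega m' d))) : Prop :=
  (∀ S ∈ P, IsSubsegment S) ∧ ∀ x : QOmega m' d, ∃! S, S ∈ P ∧ x ∈ S

open Classical in
/-- The quiver representation `f_Σ` attached to a segmentation: `f(b_{i,j}) = b_{i+1,j'}` if
`(i,j)` and `(i+1,j')` lie in a common subsegment, and `f(b_{i,j}) = 0` otherwise. -/
def segRep {m' : ℕ} {d : Fin (m' + 1) → ℕ} (P : Set (Set (QOmega m' d))) : QRep m' d :=
  fun i => Matrix.of fun j' j =>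
    if ∃ S ∈ P, (⟨i.castSucc, j⟩ : QOmega m' d) ∈ S ∧ (⟨i.succ, j'⟩ : QOmega m' d) ∈ S
    then (1 : ℂ) else 0

/-- Two segmentations define the same `χ`-flavored multisegment: there is a bijection between
their subsegments matching the underlying segments, and matching subsegments ending at the top
level only when the corresponding flavors (entries of `χ`) agree. -/
def SameMultisegment {m' : ℕ} {d : Fin (m' + 1) → ℕ} (χ : Fin (d (Fin.last m')) → ℤ)
    (P P' : Set (Set (QOmega m' d))) : Prop :=
  ∃ φ : P ≃ P', ∀ S : P,
    levelsOf (S : Set (QOmega m' d)) = levelsOf ((φ S : Set (QOmega m' d))) ∧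
    ∀ j j' : Fin (d (Fin.last m')),
      (⟨Fin.last m', j⟩ : QOmega m' d) ∈ (S : Set (QOmega m' d)) →
      (⟨Fin.last m', j'⟩ : QOmega m' d) ∈ ((φ S : Set (QOmega m' d))) → χ j = χ j'

/-- `f` and `f'` lie in the same `G_χ = P_χ × G_0` orbit. -/
def SameOrbit {m' : ℕ} {d : Fin (m' + 1) → ℕ} (χ : Fin (d (Fin.last m')) → ℤ)
    (f f' : QRep m' d) : Prop :=
  ∃ g : QGroup m' d,
    InParabolic χ ((g (Fin.last m') : Matrix (Fin (d (Fin.last m'))) (Fin (d (Fin.last m'))) ℂ)) ∧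
    qAct g f = f'

/-- The composite `f_{k;1} = f_{k-1} ∘ ⋯ ∘ f_1 : ℂ^{v_1} → ℂ^{v_k}` (as a matrix). -/
def qComp {m' : ℕ} {d : Fin (m' + 1) → ℕ} (f : QRep m' d) :
    (k : ℕ) → (hk : k ≤ m') →
      Matrix (Fin (d ⟨k, Nat.lt_succ_of_le hk⟩)) (Fin (d ⟨0, Nat.succ_pos m'⟩)) ℂ
  | 0, _ => 1
  | k + 1, hk =>
      (show Matrix (Fin (d ⟨k + 1, Nat.lt_succ_of_le hk⟩))
          (Fin (d ⟨k, Nat.lt_succ_of_le (Nat.le_of_succ_le hk)⟩)) ℂ from f ⟨k, hk⟩) *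
        qComp f k (Nat.le_of_succ_le hk)

/-- The coordinate subspace `F_p = span{e_j : χ_j ≤ p} ⊆ ℂ^n`. -/
def coordF {N : ℕ} (χ : Fin N → ℤ) (p : ℤ) : Submodule ℂ (Fin N → ℂ) :=
  Submodule.span ℂ {x : Fin N → ℂ | ∃ j : Fin N, χ j ≤ p ∧ x = Pi.single j 1}

/-! ### Auxiliary development -/

section Aux

/-- The coordinate subspace of vectors vanishing at all indices satisfying `q`. -/
def coSub {b : ℕ} (q : Fin b → Prop) : Submodule ℂ (Fin b → ℂ) where
  carrier := {x | ∀ j, q j → x j = 0}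
  add_mem' := fun hx hy j hj => by simp [hx j hj, hy j hj]
  zero_mem' := fun j _ => rfl
  smul_mem' := fun c x hx j hj => by simp [hx j hj]

lemma mem_coSub {b : ℕ} {q : Fin b → Prop} {x : Fin b → ℂ} :
    x ∈ coSub q ↔ ∀ j, q j → x j = 0 := Iff.rfl

lemma coSub_le {b : ℕ} {q q' : Fin b → Prop} (h : ∀ j, q' j → q j) :
    coSub q ≤ coSub q' := fun _x hx j hj => hx j (h j hj)

open Classical in
lemma coSub_eq_ker {b : ℕ} (q : Fin b → Prop) :
    coSub q = LinearMap.ker (LinearMap.funLeft ℂ ℂ ((↑) : {j // q j} → Fin b)) := by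
  ext x
  simp only [mem_coSub, LinearMap.mem_ker, LinearMap.funLeft, LinearMap.coe_mk,
    AddHom.coe_mk, funext_iff, Function.comp_apply, Pi.zero_apply, Subtype.forall]

lemma finrank_coSub {b : ℕ} (q : Fin b → Prop) :
    Module.finrank ℂ (coSub q) = b - Nat.card {j // q j} := by
  classical
  have hsurj : Function.Surjective (LinearMap.funLeft ℂ ℂ ((↑) : {j // q j} → Fin b)) :=
    LinearMap.funLeft_surjective_of_injective ℂ ℂ _ Subtype.val_injective
  have h := LinearMap.finrank_range_add_finrank_ker
    (LinearMap.funLeft ℂ ℂ ((↑) : {j // q j} → Fin b))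
  rw [LinearMap.range_eq_top.mpr hsurj, finrank_top, Module.finrank_pi, Module.finrank_pi,
    Fintype.card_fin] at h
  rw [coSub_eq_ker, Nat.card_eq_fintype_card]
  omega

lemma natcard_subtype_le {b : ℕ} (q : Fin b → Prop) : Nat.card {j // q j} ≤ b := by
  classical
  rw [Nat.card_eq_fintype_card]
  simpa using Fintype.card_subtype_le q

lemma natcard_subtype_mono {b : ℕ} {q q' : Fin b → Prop} (h : ∀ j, q' j → q j) :
    Nat.card {j // q' j} ≤ Nat.card {j // q j} := by
  classical
  rw [Nat.card_eq_fintype_card, Nat.card_eq_fintype_card]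
  exact Fintype.card_subtype_mono _ _ h

lemma natcard_and_not {b : ℕ} (q q' : Fin b → Prop) (h : ∀ j, q' j → q j) :
    Nat.card {j // q j ∧ ¬ q' j} = Nat.card {j // q j} - Nat.card {j // q' j} := by
  classical
  rw [Nat.card_eq_fintype_card, Nat.card_eq_fintype_card, Nat.card_eq_fintype_card,
    Fintype.card_subtype, Fintype.card_subtype, Fintype.card_subtype]
  have hsub : Finset.univ.filter q' ⊆ Finset.univ.filter q := by
    intro j hj
    simp only [Finset.mem_filter, Finset.mem_univ, true_and] at hj ⊢
    exact h j hj
  rw [← Finset.card_sdiff_of_subset hsub]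
  congr 1
  ext j
  simp only [Finset.mem_sdiff, Finset.mem_filter, Finset.mem_univ, true_and]

variable {m' : ℕ} {d : Fin (m' + 1) → ℕ} {P : Set (Set (QOmega m' d))}

lemma seg_eq (hP : IsSegmentation P) {S S' : Set (QOmega m' d)} (hS : S ∈ P) (hS' : S' ∈ P)
    {x : QOmega m' d} (hx : x ∈ S) (hx' : x ∈ S') : S = S' := by
  obtain ⟨T, -, hT⟩ := hP.2 x
  rw [hT S ⟨hS, hx⟩, hT S' ⟨hS', hx'⟩]

lemma level_eq (hP : IsSegmentation P) {S : Set (QOmega m' d)} (hS : S ∈ P)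
    {i : Fin (m' + 1)} {j j' : Fin (d i)} (h : (⟨i, j⟩ : QOmega m' d) ∈ S)
    (h' : (⟨i, j'⟩ : QOmega m' d) ∈ S) : j = j' :=
  (hP.1 S hS).2.1 i j j' h h'

lemma level_mid (hP : IsSegmentation P) {S : Set (QOmega m' d)} (hS : S ∈ P)
    {i₁ i₂ : Fin (m' + 1)} (i₃ : Fin (m' + 1)) (h₁ : i₁ ∈ levelsOf S) (h₂ : i₂ ∈ levelsOf S)
    (h₁₃ : i₁ ≤ i₃) (h₃₂ : i₃ ≤ i₂) : i₃ ∈ levelsOf S :=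
  (hP.1 S hS).2.2 i₁ i₂ i₃ h₁ h₂ h₁₃ h₃₂

open Classical in
lemma qComp_segRep_apply (hP : IsSegmentation P) (K : ℕ) (hK : K ≤ m')
    (j' : Fin (d ⟨K, Nat.lt_succ_of_le hK⟩)) (j : Fin (d ⟨0, Nat.succ_pos m'⟩)) :
    qComp (segRep P) K hK j' j =
      if ∃ S ∈ P, (⟨⟨0, Nat.succ_pos m'⟩, j⟩ : QOmega m' d) ∈ S ∧
        (⟨⟨K, Nat.lt_succ_of_le hK⟩, j'⟩ : QOmega m' d) ∈ S then 1 else 0 := by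
  classical
  induction K with
  | zero =>
    show (1 : Matrix (Fin (d ⟨0, Nat.succ_pos m'⟩)) (Fin (d ⟨0, Nat.succ_pos m'⟩)) ℂ) j' j = _
    rw [Matrix.one_apply]
    refine if_congr ⟨?_, ?_⟩ rfl rfl
    · rintro rfl
      obtain ⟨S, hS, -⟩ := hP.2 ⟨⟨0, Nat.succ_pos m'⟩, j'⟩
      exact ⟨S, hS.1, hS.2, hS.2⟩
    · rintro ⟨S, hS, h1, h2⟩
      exact level_eq hP hS h2 h1
  | succ K ih =>
    have hK' : K ≤ m' := Nat.le_of_succ_le hK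
    show ((show Matrix (Fin (d ⟨K + 1, Nat.lt_succ_of_le hK⟩))
        (Fin (d ⟨K, Nat.lt_succ_of_le hK'⟩)) ℂ from segRep P ⟨K, hK⟩) *
        qComp (segRep P) K hK') j' j = _
    rw [Matrix.mul_apply]
    have hent : ∀ j₁ : Fin (d ⟨K, Nat.lt_succ_of_le hK'⟩),
        segRep P ⟨K, hK⟩ j' j₁ =
          if ∃ S ∈ P, (⟨⟨K, Nat.lt_succ_of_le hK'⟩, j₁⟩ : QOmega m' d) ∈ S ∧
            (⟨⟨K + 1, Nat.lt_succ_of_le hK⟩, j'⟩ : QOmega m' d) ∈ S then 1 else 0 := by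
      intro j₁
      simp only [segRep, Matrix.of_apply, Fin.castSucc_mk, Fin.succ_mk]
    by_cases h : ∃ S ∈ P, (⟨⟨0, Nat.succ_pos m'⟩, j⟩ : QOmega m' d) ∈ S ∧
        (⟨⟨K + 1, Nat.lt_succ_of_le hK⟩, j'⟩ : QOmega m' d) ∈ S
    · rw [if_pos h]
      obtain ⟨S, hS, h0, hK1⟩ := h
      obtain ⟨j₀, hj₀⟩ := level_mid hP hS (⟨K, Nat.lt_succ_of_le hK'⟩ : Fin (m' + 1))
        ⟨j, h0⟩ ⟨j', hK1⟩ (by simp [Fin.mk_le_mk]) (by simp [Fin.mk_le_mk])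
      rw [Finset.sum_eq_single j₀]
      · simp only [hent, ih hK']
        rw [if_pos ⟨S, hS, hj₀, hK1⟩, if_pos ⟨S, hS, h0, hj₀⟩, mul_one]
      · intro j₁ _ hne
        simp only [hent, ih hK']
        rcases Classical.em (∃ S ∈ P, (⟨⟨K, Nat.lt_succ_of_le hK'⟩, j₁⟩ : QOmega m' d) ∈ S ∧
            (⟨⟨K + 1, Nat.lt_succ_of_le hK⟩, j'⟩ : QOmega m' d) ∈ S) with hc | hc
        · obtain ⟨S₁, hS₁, ha, hb⟩ := hc
          have hSS : S₁ = S := seg_eq hP hS₁ hS hb hK1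
          exact absurd (level_eq hP hS (hSS ▸ ha) hj₀) hne
        · rw [if_neg hc, zero_mul]
      · intro hmem
        exact absurd (Finset.mem_univ _) hmem
    · rw [if_neg h]
      refine Finset.sum_eq_zero fun j₁ _ => ?_
      simp only [hent, ih hK']
      rcases Classical.em (∃ S ∈ P, (⟨⟨K, Nat.lt_succ_of_le hK'⟩, j₁⟩ : QOmega m' d) ∈ S ∧
          (⟨⟨K + 1, Nat.lt_succ_of_le hK⟩, j'⟩ : QOmega m' d) ∈ S) with hc | hc
      · obtain ⟨S₁, hS₁, ha, hb⟩ := hc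
        rcases Classical.em (∃ S ∈ P, (⟨⟨0, Nat.succ_pos m'⟩, j⟩ : QOmega m' d) ∈ S ∧
            (⟨⟨K, Nat.lt_succ_of_le hK'⟩, j₁⟩ : QOmega m' d) ∈ S) with hc2 | hc2
        · obtain ⟨S₂, hS₂, h0, hm⟩ := hc2
          have hSS : S₂ = S₁ := seg_eq hP hS₂ hS₁ hm ha
          exact absurd ⟨S₁, hS₁, hSS ▸ h0, hb⟩ h
        · rw [if_neg hc2, mul_zero]
      · rw [if_neg hc, zero_mul]

lemma mulVec_seg_of_mem (hP : IsSegmentation P) {K : ℕ} {hK : K ≤ m'} {S : Set (QOmega m' d)}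
    (hS : S ∈ P) {j : Fin (d ⟨0, Nat.succ_pos m'⟩)} {j' : Fin (d ⟨K, Nat.lt_succ_of_le hK⟩)}
    (h0 : (⟨⟨0, Nat.succ_pos m'⟩, j⟩ : QOmega m' d) ∈ S)
    (hK' : (⟨⟨K, Nat.lt_succ_of_le hK⟩, j'⟩ : QOmega m' d) ∈ S)
    (x : Fin (d ⟨0, Nat.succ_pos m'⟩) → ℂ) :
    (qComp (segRep P) K hK).mulVec x j' = x j := by
  classical
  have hent : ∀ j₁, qComp (segRep P) K hK j' j₁ = if j₁ = j then 1 else 0 := by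
    intro j₁
    rw [qComp_segRep_apply hP]
    refine if_congr ⟨?_, ?_⟩ rfl rfl
    · rintro ⟨S₁, hS₁, ha, hb⟩
      have hSS : S₁ = S := seg_eq hP hS₁ hS hb hK'
      exact level_eq hP hS (hSS ▸ ha) h0
    · rintro rfl
      exact ⟨S, hS, h0, hK'⟩
  simp only [Matrix.mulVec, dotProduct]
  rw [Finset.sum_eq_single j (fun b _ hb => by rw [hent b, if_neg hb, zero_mul])
    (fun h => absurd (Finset.mem_univ j) h),
    hent j, if_pos rfl, one_mul]

lemma mulVec_seg_of_not (hP : IsSegmentation P) {K : ℕ} {hK : K ≤ m'}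
    {j' : Fin (d ⟨K, Nat.lt_succ_of_le hK⟩)}
    (h : ∀ j : Fin (d ⟨0, Nat.succ_pos m'⟩), ¬ ∃ S ∈ P,
      (⟨⟨0, Nat.succ_pos m'⟩, j⟩ : QOmega m' d) ∈ S ∧
      (⟨⟨K, Nat.lt_succ_of_le hK⟩, j'⟩ : QOmega m' d) ∈ S)
    (x : Fin (d ⟨0, Nat.succ_pos m'⟩) → ℂ) :
    (qComp (segRep P) K hK).mulVec x j' = 0 := by
  classical
  have hent : ∀ j₁, qComp (segRep P) K hK j' j₁ = 0 := by
    intro j₁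
    rw [qComp_segRep_apply hP, if_neg (h j₁)]
  simp [Matrix.mulVec, dotProduct, hent]
  exact (Finset.sum_congr rfl fun i _ => by rw [hent i]).trans (by simp)

/-- The segment through `(0,j)` reaches level `K`. -/
def Rch (P : Set (Set (QOmega m' d))) (K : ℕ) (hK : K ≤ m')
    (j : Fin (d ⟨0, Nat.succ_pos m'⟩)) : Prop :=
  ∃ S ∈ P, (⟨⟨0, Nat.succ_pos m'⟩, j⟩ : QOmega m' d) ∈ S ∧
    ∃ j' : Fin (d ⟨K, Nat.lt_succ_of_le hK⟩),
      (⟨⟨K, Nat.lt_succ_of_le hK⟩, j'⟩ : QOmega m' d) ∈ S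

/-- The segment through `(0,j)` reaches the top level with flavor `> p`. -/
def BadP (P : Set (Set (QOmega m' d))) (χ : Fin (d (Fin.last m')) → ℤ) (p : ℤ)
    (j : Fin (d ⟨0, Nat.succ_pos m'⟩)) : Prop :=
  ∃ S ∈ P, (⟨⟨0, Nat.succ_pos m'⟩, j⟩ : QOmega m' d) ∈ S ∧
    ∃ j' : Fin (d (Fin.last m')), (⟨Fin.last m', j'⟩ : QOmega m' d) ∈ S ∧ p < χ j'

lemma rch_of_succ (hP : IsSegmentation P) {K : ℕ} {hK : K + 1 ≤ m'}
    {j : Fin (d ⟨0, Nat.succ_pos m'⟩)} (h : Rch P (K + 1) hK j) :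
    Rch P K (Nat.le_of_succ_le hK) j := by
  obtain ⟨S, hS, h0, j', hj'⟩ := h
  obtain ⟨j₀, hj₀⟩ := level_mid hP hS
    (⟨K, Nat.lt_succ_of_le (Nat.le_of_succ_le hK)⟩ : Fin (m' + 1))
    ⟨j, h0⟩ ⟨j', hj'⟩ (by simp [Fin.mk_le_mk]) (by simp [Fin.mk_le_mk])
  exact ⟨S, hS, h0, j₀, hj₀⟩

lemma bad_rch (hP : IsSegmentation P) {χ : Fin (d (Fin.last m')) → ℤ} {p : ℤ}
    {j : Fin (d ⟨0, Nat.succ_pos m'⟩)} (h : BadP P χ p j) : Rch P m' le_rfl j := by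
  obtain ⟨S, hS, h0, j', hj', -⟩ := h
  exact ⟨S, hS, h0, j', hj'⟩

lemma ker_qComp (hP : IsSegmentation P) (K : ℕ) (hK : K ≤ m') :
    LinearMap.ker (Matrix.toLin' (qComp (segRep P) K hK)) = coSub (Rch P K hK) := by
  ext x
  rw [LinearMap.mem_ker, mem_coSub]
  constructor
  · intro hx j hj
    obtain ⟨S, hS, h0, j', hj'⟩ := hj
    have h1 : (qComp (segRep P) K hK).mulVec x j' = 0 := by
      rw [← Matrix.toLin'_apply, hx]
      rfl
    rw [mulVec_seg_of_mem hP hS h0 hj'] at h1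
    exact h1
  · intro hx
    rw [Matrix.toLin'_apply]
    funext j'
    show (qComp (segRep P) K hK).mulVec x j' = 0
    by_cases hc : ∃ j : Fin (d ⟨0, Nat.succ_pos m'⟩), ∃ S ∈ P,
        (⟨⟨0, Nat.succ_pos m'⟩, j⟩ : QOmega m' d) ∈ S ∧
        (⟨⟨K, Nat.lt_succ_of_le hK⟩, j'⟩ : QOmega m' d) ∈ S
    · obtain ⟨j, S, hS, h0, hj'⟩ := hc
      rw [mulVec_seg_of_mem hP hS h0 hj']
      exact hx j ⟨S, hS, h0, j', hj'⟩
    · exact mulVec_seg_of_not hP (fun j hj => hc ⟨j, hj⟩) x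

lemma coordF_eq_coSub {N : ℕ} (χ : Fin N → ℤ) (p : ℤ) :
    coordF χ p = coSub (fun j => p < χ j) := by
  apply le_antisymm
  · rw [coordF, Submodule.span_le]
    rintro x ⟨j, hj, rfl⟩ j' hj'
    have hne : j' ≠ j := fun h => absurd hj' (by rw [h]; exact not_lt.mpr hj)
    exact Pi.single_eq_of_ne hne 1
  · intro x hx
    have hx2 : x = ∑ j, Pi.single j (x j) := (Finset.univ_sum_single x).symm
    rw [hx2]
    refine Submodule.sum_mem _ fun j _ => ?_
    by_cases hj : p < χ j
    · rw [hx j hj]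
      simp
    · have h1 : Pi.single j (x j) = x j • (Pi.single j 1 : Fin N → ℂ) := by
        rw [← Pi.single_smul, smul_eq_mul, mul_one]
      rw [h1]
      exact Submodule.smul_mem _ _ (Submodule.subset_span ⟨j, not_lt.mp hj, rfl⟩)

lemma comap_qComp (hP : IsSegmentation P) (χ : Fin (d (Fin.last m')) → ℤ) (p : ℤ) :
    Submodule.comap (Matrix.toLin' (qComp (segRep P) m' le_rfl)) (coordF χ p) =
      coSub (BadP P χ p) := by
  ext x
  simp only [Submodule.mem_comap, coordF_eq_coSub, mem_coSub]
  constructor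
  · intro hx j hj
    obtain ⟨S, hS, h0, j', hj', hχ⟩ := hj
    have h1 : (qComp (segRep P) m' le_rfl).mulVec x j' = x j := mulVec_seg_of_mem hP hS h0 hj' x
    have h2 : (qComp (segRep P) m' le_rfl).mulVec x j' = 0 := hx j' hχ
    rw [h1] at h2
    exact h2
  · intro hx j' hj'
    show (qComp (segRep P) m' le_rfl).mulVec x j' = 0
    by_cases hc : ∃ j : Fin (d ⟨0, Nat.succ_pos m'⟩), ∃ S ∈ P,
        (⟨⟨0, Nat.succ_pos m'⟩, j⟩ : QOmega m' d) ∈ S ∧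
        (⟨Fin.last m', j'⟩ : QOmega m' d) ∈ S
    · obtain ⟨j, S, hS, h0, hm⟩ := hc
      rw [mulVec_seg_of_mem hP hS h0 hm]
      exact hx j ⟨S, hS, h0, j', hm, hj'⟩
    · exact mulVec_seg_of_not hP (fun j hj => hc ⟨j, hj⟩) x

lemma count1 (hP : IsSegmentation P) (K : ℕ) (hK : K < m') :
    {S : Set (QOmega m' d) | S ∈ P ∧ levelsOf S = {i : Fin (m' + 1) | (i : ℕ) ≤ K}}.ncard =
      Nat.card {j // Rch P K hK.le j ∧ ¬ Rch P (K + 1) hK j} := by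
  rw [← Nat.card_coe_set_eq]
  have hex : ∀ j : {j // Rch P K hK.le j ∧ ¬ Rch P (K + 1) hK j},
      ∃ S : Set (QOmega m' d),
        (S ∈ P ∧ levelsOf S = {i : Fin (m' + 1) | (i : ℕ) ≤ K}) ∧
        (⟨⟨0, Nat.succ_pos m'⟩, (j : Fin (d ⟨0, Nat.succ_pos m'⟩))⟩ : QOmega m' d) ∈ S := by
    rintro ⟨j, ⟨S, hS, h0, j', hj'⟩, hnot⟩
    refine ⟨S, ⟨hS, ?_⟩, h0⟩
    ext i
    simp only [Set.mem_setOf_eq]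
    constructor
    · intro hi
      by_contra hgt
      push_neg at hgt
      have hK1 : (⟨K + 1, Nat.lt_succ_of_le hK⟩ : Fin (m' + 1)) ∈ levelsOf S :=
        level_mid hP hS _ ⟨j, h0⟩ hi (by simp [Fin.le_def]) (by simp [Fin.le_def]; omega)
      obtain ⟨j₂, hj₂⟩ := hK1
      exact hnot ⟨S, hS, h0, j₂, hj₂⟩
    · intro hi
      exact level_mid hP hS i ⟨j, h0⟩ ⟨j', hj'⟩ (by simp [Fin.le_def])
        (by simp [Fin.le_def]; omega)
  choose F hF1 hF2 using hex
  refine (Nat.card_eq_of_bijective (fun j => ⟨F j, hF1 j⟩) ⟨?_, ?_⟩).symm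
  · intro j j₂ heq
    simp only [Subtype.mk.injEq] at heq
    exact Subtype.ext (level_eq hP (hF1 j).1 (hF2 j) (heq ▸ hF2 j₂))
  · rintro ⟨S, hS, hlev⟩
    have h0lev : (⟨0, Nat.succ_pos m'⟩ : Fin (m' + 1)) ∈ levelsOf S := by
      rw [hlev]; simp
    obtain ⟨j, hj0⟩ := h0lev
    have hKlev : (⟨K, Nat.lt_succ_of_le hK.le⟩ : Fin (m' + 1)) ∈ levelsOf S := by
      rw [hlev]; simp
    obtain ⟨j', hj'⟩ := hKlev
    have hQ : Rch P K hK.le j ∧ ¬ Rch P (K + 1) hK j := by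
      refine ⟨⟨S, hS, hj0, j', hj'⟩, ?_⟩
      rintro ⟨S₁, hS₁, h0₁, j₂, hj₂⟩
      have hSS : S₁ = S := seg_eq hP hS₁ hS h0₁ hj0
      have : (⟨K + 1, Nat.lt_succ_of_le hK⟩ : Fin (m' + 1)) ∈ levelsOf S :=
        ⟨j₂, hSS ▸ hj₂⟩
      rw [hlev] at this
      simp at this
    refine ⟨⟨j, hQ⟩, ?_⟩
    exact Subtype.ext (seg_eq hP (hF1 ⟨j, hQ⟩).1 hS (hF2 ⟨j, hQ⟩) hj0)

lemma count2 (hP : IsSegmentation P) (χ : Fin (d (Fin.last m')) → ℤ) (p : ℤ) :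
    {S : Set (QOmega m' d) | S ∈ P ∧ levelsOf S = Set.univ ∧
        ∃ j : Fin (d (Fin.last m')), (⟨Fin.last m', j⟩ : QOmega m' d) ∈ S ∧ χ j ≤ p}.ncard =
      Nat.card {j // Rch P m' le_rfl j ∧ ¬ BadP P χ p j} := by
  rw [← Nat.card_coe_set_eq]
  have hex : ∀ j : {j // Rch P m' le_rfl j ∧ ¬ BadP P χ p j},
      ∃ S : Set (QOmega m' d),
        (S ∈ P ∧ levelsOf S = Set.univ ∧
          ∃ j' : Fin (d (Fin.last m')), (⟨Fin.last m', j'⟩ : QOmega m' d) ∈ S ∧ χ j' ≤ p) ∧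
        (⟨⟨0, Nat.succ_pos m'⟩, (j : Fin (d ⟨0, Nat.succ_pos m'⟩))⟩ : QOmega m' d) ∈ S := by
    rintro ⟨j, ⟨S, hS, h0, j', hj'⟩, hnot⟩
    have hlast : (⟨Fin.last m', j'⟩ : QOmega m' d) ∈ S := hj'
    refine ⟨S, ⟨hS, ?_, j', hlast, ?_⟩, h0⟩
    · ext i
      simp only [Set.mem_univ, iff_true]
      exact level_mid hP hS i ⟨j, h0⟩ ⟨j', hj'⟩ (by simp [Fin.le_def]) (by exact Fin.le_last i)
    · by_contra hgt
      push_neg at hgt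
      exact hnot ⟨S, hS, h0, j', hlast, hgt⟩
  choose F hF1 hF2 using hex
  refine (Nat.card_eq_of_bijective (fun j => ⟨F j, hF1 j⟩) ⟨?_, ?_⟩).symm
  · intro j j₂ heq
    simp only [Subtype.mk.injEq] at heq
    exact Subtype.ext (level_eq hP (hF1 j).1 (hF2 j) (heq ▸ hF2 j₂))
  · rintro ⟨S, hS, hlev, jt, hjt, hjtp⟩
    have h0lev : (⟨0, Nat.succ_pos m'⟩ : Fin (m' + 1)) ∈ levelsOf S := by
      rw [hlev]; trivial
    obtain ⟨j, hj0⟩ := h0lev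
    have hQ : Rch P m' le_rfl j ∧ ¬ BadP P χ p j := by
      constructor
      · exact ⟨S, hS, hj0, jt, hjt⟩
      · rintro ⟨S₁, hS₁, h0₁, j₂, hj₂, hχ₂⟩
        have hSS : S₁ = S := seg_eq hP hS₁ hS h0₁ hj0
        have hj₂' : (⟨Fin.last m', j₂⟩ : QOmega m' d) ∈ S := hSS ▸ hj₂
        have : j₂ = jt := level_eq hP hS hj₂' hjt
        rw [this] at hχ₂
        exact absurd hjtp (not_le.mpr hχ₂)
    refine ⟨⟨j, hQ⟩, ?_⟩
    exact Subtype.ext (seg_eq hP (hF1 ⟨j, hQ⟩).1 hS (hF2 ⟨j, hQ⟩) hj0)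

end Aux

open Matrix in
/-- For the point `f_Σ` of a segmentation `Σ`: the rank of `f_{Σ,k;1}` restricted to
`ker f_{Σ,k+1;1}` counts the subsegments running from level `1` to level `k`, and the dimension
of `(f_{Σ,m;1})⁻¹(F_p)` exceeds `dim ker f_{Σ,m;1}` by the number of subsegments running from
level `1` to level `m` whose flavor is at most `p`. -/
theorem segmentation_rank_counts (m' : ℕ) (hm : 1 ≤ m') (d : Fin (m' + 1) → ℕ)
    (χ : Fin (d (Fin.last m')) → ℤ) (hχ : Monotone χ)
    (P : Set (Set (QOmega m' d))) (hP : IsSegmentation P) :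
    (∀ (K : ℕ) (hK : K < m'),
      Module.finrank ℂ
          ↥(Submodule.map (Matrix.toLin' (qComp (segRep P) K hK.le))
            (LinearMap.ker (Matrix.toLin' (qComp (segRep P) (K + 1) hK)))) =
        Set.ncard {S : Set (QOmega m' d) | S ∈ P ∧
          levelsOf S = {i : Fin (m' + 1) | (i : ℕ) ≤ K}}) ∧
    (∀ p : ℤ,
      Module.finrank ℂ
          ↥(Submodule.comap (Matrix.toLin' (qComp (segRep P) m' le_rfl)) (coordF χ p)) =
        Module.finrank ℂ ↥(LinearMap.ker (Matrix.toLin' (qComp (segRep P) m' le_rfl))) +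
          Set.ncard {S : Set (QOmega m' d) | S ∈ P ∧ levelsOf S = Set.univ ∧
            ∃ j : Fin (d (Fin.last m')), (⟨Fin.last m', j⟩ : QOmega m' d) ∈ S ∧ χ j ≤ p}) := by
  constructor
  · intro K hK
    have hkerK := ker_qComp hP K hK.le
    have hkerK1 := ker_qComp hP (K + 1) hK
    have hle : LinearMap.ker (Matrix.toLin' (qComp (segRep P) K hK.le)) ≤
        LinearMap.ker (Matrix.toLin' (qComp (segRep P) (K + 1) hK)) := by
      rw [hkerK, hkerK1]
      exact coSub_le fun j => rch_of_succ hP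
    have h3 := LinearMap.finrank_range_add_finrank_ker
      ((Matrix.toLin' (qComp (segRep P) K hK.le)).domRestrict
        (LinearMap.ker (Matrix.toLin' (qComp (segRep P) (K + 1) hK))))
    rw [LinearMap.range_domRestrict, LinearMap.ker_domRestrict] at h3
    have h4 : Module.finrank ℂ
        ↥(Submodule.comap (LinearMap.ker (Matrix.toLin' (qComp (segRep P) (K + 1) hK))).subtype
          (LinearMap.ker (Matrix.toLin' (qComp (segRep P) K hK.le)))) =
        Module.finrank ℂ ↥(LinearMap.ker (Matrix.toLin' (qComp (segRep P) K hK.le))) :=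
      LinearEquiv.finrank_eq (Submodule.comapSubtypeEquivOfLe hle)
    rw [h4, hkerK, hkerK1, finrank_coSub, finrank_coSub] at h3
    rw [count1 hP K hK, natcard_and_not _ _ (fun j => rch_of_succ hP), hkerK1]
    have hb1 := natcard_subtype_le (Rch P K hK.le)
    have hb2 := natcard_subtype_mono (q := Rch P K hK.le) (q' := Rch P (K + 1) hK)
      (fun j => rch_of_succ hP)
    omega
  · intro p
    rw [comap_qComp hP χ p, ker_qComp hP m' le_rfl, finrank_coSub, finrank_coSub,
      count2 hP χ p, natcard_and_not _ _ (fun j => bad_rch hP)]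
    have hb1 := natcard_subtype_le (Rch P m' le_rfl)
    have hb2 := natcard_subtype_mono (q := Rch P m' le_rfl) (q' := BadP P χ p)
      (fun j => bad_rch hP)
    omega

end
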